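/- arXiv:1601.04162 — 3 statements merged into one kernel-verified Lean document; each statement's English description precedes it below -/
import Mathlib

section
/- Let G be a graph on n vertices. If δ(G) ≥ (n+1)/2, then G is Hamilton-connected, i.e., between any two distinct vertices there is a Hamilton (spanning) path. -/
open SimpleGraph

variable {V : Type*}

/-- A walk is proper w.r.t. an edge-coloring if consecutive edges get distinct colors. -/
def IsProperWalk {α : Type*} {G : SimpleGraph V} (c : Sym2 V → α) {u v : V} (p : G.Walk u v) : Prop :=
  p.edges.Chain' (fun e f => c e ≠ c f)

/-- An edge-coloring is a proper-path coloring if every pair of vertices is joined by a proper path. -/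
def IsProperConnColoring {α : Type*} (G : SimpleGraph V) (c : Sym2 V → α) : Prop :=
  ∀ u v : V, ∃ p : G.Walk u v, p.IsPath ∧ IsProperWalk c p

/-- The proper connection number. -/
noncomputable def pc (G : SimpleGraph V) : ℕ :=
  sInf {k | ∃ c : Sym2 V → Fin k, IsProperConnColoring G c}

/-- Strong property of an edge-coloring. -/
def HasStrongProp {α : Type*} (G : SimpleGraph V) (c : Sym2 V → α) : Prop :=
  IsProperConnColoring G c ∧
  ∀ u v : V, u ≠ v → ∃ p₁ p₂ : G.Walk u v, p₁.IsPath ∧ p₂.IsPath ∧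
    IsProperWalk c p₁ ∧ IsProperWalk c p₂ ∧
    p₁.edges.head?.map c ≠ p₂.edges.head?.map c ∧
    p₁.edges.getLast?.map c ≠ p₂.edges.getLast?.map c

/-- k-connectedness. -/
def KConnected (k : ℕ) (G : SimpleGraph V) [Fintype V] : Prop :=
  k < Fintype.card V ∧ ∀ S : Finset V, S.card < k → (G.induce ((↑S : Set V)ᶜ)).Connected

/-- edge chromatic number -/
noncomputable def edgeChromatic (G : SimpleGraph V) : ℕ :=
  sInf {k | ∃ c : Sym2 V → Fin k, ∀ e ∈ G.edgeSet, ∀ f ∈ G.edgeSet, e ≠ f →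
    (∃ x, x ∈ e ∧ x ∈ f) → c e ≠ c f}

/-- rainbow connection number -/
noncomputable def rc (G : SimpleGraph V) : ℕ :=
  sInf {k | ∃ c : Sym2 V → Fin k, ∀ u v : V, ∃ p : G.Walk u v, p.IsPath ∧ (p.edges.map c).Nodup}


open List

set_option linter.unusedSectionVars false
set_option linter.unusedVariables false

def HamList' (G : SimpleGraph V) (u v : V) (l : List V) : Prop :=
  l.Chain' G.Adj ∧ l.head? = some u ∧ l.getLast? = some v ∧ l.Nodup ∧ ∀ w, w ∈ l

lemma getLast?_append_right' (l m : List V) (h : m ≠ []) :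
    (l ++ m).getLast? = m.getLast? := by
  rw [List.getLast?_append]
  have : m.getLast?.isSome := List.getLast?_isSome.2 h
  cases hm : m.getLast? with
  | none => rw [hm] at this; simp at this
  | some a => rfl

lemma head?_take_succ' (l : List V) (k : ℕ) : (l.take (k+1)).head? = l.head? := by
  cases l <;> simp

lemma walk_of_chain' {G : SimpleGraph V} :
    ∀ (l : List V) (u v : V), (u :: l).Chain' G.Adj → (u :: l).getLast? = some v →
    ∃ p : G.Walk u v, p.support = u :: l := by
  intro l
  induction l with
  | nil => intro u v _ hl; simp at hl; subst hl; exact ⟨Walk.nil, rfl⟩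
  | cons a t ih =>
      intro u v hc hl
      unfold List.Chain' at hc
      rw [List.isChain_cons_cons] at hc
      obtain ⟨p, hp⟩ := ih a v hc.2 (by simpa using hl)
      exact ⟨Walk.cons hc.1 p, by simp [hp]⟩

lemma exists_bad_pair' {G G' : SimpleGraph V} :
    ∀ (l : List V), l.Chain' G'.Adj → ¬ l.Chain' G.Adj →
    ∃ (L R : List V) (a b : V), l = L ++ a :: b :: R ∧ G'.Adj a b ∧ ¬ G.Adj a b := by
  intro l
  induction l with
  | nil => intro _ h; exact absurd List.isChain_nil h
  | cons c t ih =>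
      intro hc hnc
      match t, hc, hnc with
      | [], _, hnc => exact absurd (List.isChain_singleton c) hnc
      | b :: t, hc, hnc =>
          unfold List.Chain' at hc
          rw [List.isChain_cons_cons] at hc
          by_cases hcb : G.Adj c b
          · have hnt : ¬ (b :: t).Chain' G.Adj := by
              intro h; exact hnc (List.isChain_cons_cons.2 ⟨hcb, h⟩)
            obtain ⟨L, R, a', b', h1, h2, h3⟩ := ih hc.2 hnt
            exact ⟨c :: L, R, a', b', by rw [h1]; rfl, h2, h3⟩
          · exact ⟨[], t, c, b, rfl, hc.1, hcb⟩

section Big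
variable [Fintype V] [DecidableEq V] {G : SimpleGraph V} [DecidableRel G.Adj]

lemma hamList_of_complete' [Fintype V] [DecidableEq V] {G : SimpleGraph V}
    (hc : ∀ x y : V, x ≠ y → G.Adj x y) (u v : V) (huv : u ≠ v) :
    ∃ l, HamList' G u v l := by
  set m := ((Finset.univ : Finset V).erase u).erase v with hm
  have hnd : ((u :: m.toList) ++ [v]).Nodup := by
    rw [List.nodup_append]
    refine ⟨?_, List.nodup_singleton v, ?_⟩
    · rw [List.nodup_cons]
      exact ⟨by simp [hm], m.nodup_toList⟩
    · intro a ha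
      simp only [List.mem_singleton, forall_eq]
      rintro rfl
      rcases List.mem_cons.1 ha with h | h
      · exact huv h.symm
      · rw [Finset.mem_toList] at h
        simp [hm] at h
  refine ⟨(u :: m.toList) ++ [v], ?_, ?_, ?_, hnd, ?_⟩
  · exact List.IsChain.imp (fun a b h => hc a b h) (List.Pairwise.isChain hnd)
  · simp
  · exact List.getLast?_concat
  · intro w
    by_cases h1 : w = u
    · simp [h1]
    by_cases h2 : w = v
    · simp [h2]
    simp [hm, h1, h2]

lemma splice_chain' (P Q R : List V) (hP : P.Chain' G.Adj)
    (hQ : Q.Chain' G.Adj) (hR : R.Chain' G.Adj) (hQne : Q ≠ [])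
    (h1 : ∀ a ∈ P.getLast?, ∀ b ∈ Q.getLast?, G.Adj a b)
    (h2 : ∀ a ∈ Q.head?, ∀ b ∈ R.head?, G.Adj a b) :
    (P ++ (Q.reverse ++ R)).Chain' G.Adj := by
  have hQrev : Q.reverse.Chain' G.Adj := by
    unfold List.Chain'
    rw [List.isChain_reverse]
    exact List.IsChain.imp (fun a b h => h.symm) hQ
  unfold List.Chain'
  rw [List.isChain_append]
  refine ⟨hP, ?_, ?_⟩
  · rw [List.isChain_append]
    refine ⟨hQrev, hR, ?_⟩
    intro a ha b hb
    rw [List.getLast?_reverse] at ha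
    exact h2 a ha b hb
  · intro a ha b hb
    rw [List.head?_append_of_ne_nil, List.head?_reverse] at hb
    · exact h1 a ha b hb
    · simpa using hQne

lemma chain'_upgrade' {G' : SimpleGraph V} (l : List V)
    (h : ∀ a b, a ∈ l → b ∈ l → G'.Adj a b → G.Adj a b) (hc : l.Chain' G'.Adj) :
    l.Chain' G.Adj := by
  simp only [List.Chain'] at hc ⊢
  rw [List.isChain_iff_getElem] at *
  intro i hi
  exact h _ _ (List.getElem_mem ..) (List.getElem_mem ..) (hc i hi)

lemma closure_step (x y : V) (hxy : x ≠ y) (hnadj : ¬ G.Adj x y)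
    (hdeg : Fintype.card V + 1 ≤ G.degree x + G.degree y)
    (u v : V) (L R : List V)
    (hham : HamList' (G ⊔ fromEdgeSet {s(x,y)}) u v (L ++ x :: y :: R)) :
    ∃ l', HamList' G u v l' := by
  classical
  set G' := G ⊔ fromEdgeSet {s(x,y)} with hG'
  set l : List V := L ++ x :: y :: R with hldef
  obtain ⟨hchain, hhead, hlast, hnodup, hcov⟩ := hham
  set n := l.length with hn
  set a := L.length with ha
  have hlen : n = a + (R.length + 2) := by simp [hn, hldef, ha]
  -- card V = n
  have hcardV : Fintype.card V = n := by
    rw [hn, ← List.toFinset_card_of_nodup hnodup]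
    have : l.toFinset = Finset.univ := Finset.eq_univ_iff_forall.2 (fun w => by simpa using hcov w)
    rw [this, Finset.card_univ]
  set C₁ : List V := L ++ [x] with hC₁
  set C₂ : List V := y :: R with hC₂
  have hl12 : l = C₁ ++ C₂ := by simp [hldef, hC₁, hC₂]
  have hC₁len : C₁.length = a + 1 := by simp [hC₁, ha]
  have hC₂len : C₂.length = R.length + 1 := by simp [hC₂]
  have hC₁ne : C₁ ≠ [] := by simp [hC₁]
  have hC₂ne : C₂ ≠ [] := by simp [hC₂]
  have hxC₁ : x ∈ C₁ := by simp [hC₁]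
  have hyC₂ : y ∈ C₂ := by simp [hC₂]
  have hnodup12 : (C₁ ++ C₂).Nodup := hl12 ▸ hnodup
  rw [List.nodup_append] at hnodup12
  have hdisj := hnodup12.2.2
  have hyC₁ : y ∉ C₁ := fun h => hdisj y h y hyC₂ rfl
  have hxC₂ : x ∉ C₂ := fun h => hdisj x hxC₁ x h rfl
  have hchain12 : (C₁ ++ C₂).Chain' G'.Adj := hl12 ▸ hchain
  unfold List.Chain' at hchain12
  rw [List.isChain_append] at hchain12
  have hupg : ∀ (m : List V), m.Chain' G'.Adj → (x ∉ m ∨ y ∉ m) → m.Chain' G.Adj := by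
    intro m hm hnm
    apply chain'_upgrade' m _ hm
    intro c d hc hd hcd
    rcases hcd with h | h
    · exact h
    · rw [SimpleGraph.fromEdgeSet_adj] at h
      have := h.1
      simp only [Set.mem_singleton_iff, Sym2.eq_iff] at this
      rcases this with ⟨rfl, rfl⟩ | ⟨rfl, rfl⟩
      · rcases hnm with h' | h' <;> [exact absurd hc h'; exact absurd hd h']
      · rcases hnm with h' | h' <;> [exact absurd hd h'; exact absurd hc h']
  have hC₁G : C₁.Chain' G.Adj := hupg C₁ hchain12.1 (Or.inr hyC₁)
  have hC₂G : C₂.Chain' G.Adj := hupg C₂ hchain12.2.1 (Or.inl hxC₂)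
  -- index function
  set f : ℕ → V := fun i => l.getD i u with hf
  have hfa : f a = x := by
    simp only [hf, hldef, ha]
    rw [List.getD_append_right _ _ _ _ (le_refl _)]
    simp
  have hfa1 : f (a+1) = y := by
    simp only [hf, hldef, ha]
    rw [List.getD_append_right _ _ _ _ (by omega)]
    have : L.length + 1 - L.length = 1 := by omega
    rw [this]
    rfl
  -- counting
  have hcount : ∀ w, ((Finset.range n).filter fun i => G.Adj w (f i)).card = G.degree w := by
    intro w
    rw [← SimpleGraph.card_neighborFinset_eq_degree]
    apply Finset.card_bij (fun i _ => f i)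
    · intro i hi
      rw [Finset.mem_filter] at hi
      rw [SimpleGraph.mem_neighborFinset]
      exact hi.2
    · intro i hi j hj hij
      rw [Finset.mem_filter, Finset.mem_range] at hi hj
      have h1 : i < l.length := hi.1
      have h2 : j < l.length := hj.1
      simp only [hf, List.getD_eq_getElem l u h1, List.getD_eq_getElem l u h2] at hij
      have := (hnodup.get_inj_iff (i := ⟨i, h1⟩) (j := ⟨j, h2⟩)).1 hij
      exact congrArg Fin.val this
    · intro b hb
      rw [SimpleGraph.mem_neighborFinset] at hb
      obtain ⟨i, hi, hib⟩ := List.mem_iff_getElem.1 (hcov b)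
      refine ⟨i, ?_, ?_⟩
      · rw [Finset.mem_filter, Finset.mem_range]
        refine ⟨hi, ?_⟩
        simp only [hf, List.getD_eq_getElem l u hi, hib]
        exact hb
      · simp only [hf, List.getD_eq_getElem l u hi, hib]
  set A : Finset ℕ := (Finset.range (n-1)).filter (fun i => G.Adj x (f i)) with hA
  set B : Finset ℕ := (Finset.range (n-1)).filter (fun i => G.Adj y (f (i+1))) with hB
  have hAcard : G.degree x ≤ A.card + 1 := by
    rw [← hcount x]
    have hsub : (Finset.range n).filter (fun i => G.Adj x (f i)) ⊆ insert (n-1) A := by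
      intro i hi
      rw [Finset.mem_filter, Finset.mem_range] at hi
      rcases eq_or_ne i (n-1) with h | h
      · subst h; exact Finset.mem_insert_self _ _
      · exact Finset.mem_insert_of_mem (by rw [hA, Finset.mem_filter, Finset.mem_range]; exact ⟨by omega, hi.2⟩)
    calc ((Finset.range n).filter fun i => G.Adj x (f i)).card ≤ (insert (n-1) A).card :=
          Finset.card_le_card hsub
      _ ≤ A.card + 1 := Finset.card_insert_le _ _
  have hBcard : G.degree y ≤ B.card + 1 := by
    rw [← hcount y]
    have hsub : (Finset.range n).filter (fun i => G.Adj y (f i)) ⊆ insert 0 (B.image (· + 1)) := by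
      intro i hi
      rw [Finset.mem_filter, Finset.mem_range] at hi
      rcases eq_or_ne i 0 with h | h
      · subst h; exact Finset.mem_insert_self _ _
      · apply Finset.mem_insert_of_mem
        rw [Finset.mem_image]
        refine ⟨i - 1, ?_, by omega⟩
        rw [hB, Finset.mem_filter, Finset.mem_range]
        constructor
        · omega
        · have : i - 1 + 1 = i := by omega
          rw [this]; exact hi.2
    calc ((Finset.range n).filter fun i => G.Adj y (f i)).card ≤ (insert 0 (B.image (· + 1))).card :=
          Finset.card_le_card hsub
      _ ≤ (B.image (· + 1)).card + 1 := Finset.card_insert_le _ _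
      _ ≤ B.card + 1 := Nat.add_le_add_right Finset.card_image_le 1
  have haA : a ∉ A := by
    rw [hA, Finset.mem_filter]
    rintro ⟨-, h⟩
    rw [hfa] at h
    exact G.irrefl h
  have haB : a ∉ B := by
    rw [hB, Finset.mem_filter]
    rintro ⟨-, h⟩
    rw [hfa1] at h
    exact G.irrefl h
  have hAsub : A ⊆ (Finset.range (n-1)).erase a := by
    intro i hi
    rw [Finset.mem_erase]
    exact ⟨fun h => haA (h ▸ hi), Finset.mem_of_mem_filter i hi⟩
  have hBsub : B ⊆ (Finset.range (n-1)).erase a := by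
    intro i hi
    rw [Finset.mem_erase]
    exact ⟨fun h => haB (h ▸ hi), Finset.mem_of_mem_filter i hi⟩
  have hErCard : ((Finset.range (n-1)).erase a).card = n - 2 := by
    rw [Finset.card_erase_of_mem (by rw [Finset.mem_range]; omega), Finset.card_range]
    omega
  have hinter : (A ∩ B).Nonempty := by
    rw [← Finset.card_pos]
    have h1 := Finset.card_union_add_card_inter A B
    have h2 : (A ∪ B).card ≤ n - 2 := hErCard ▸ Finset.card_le_card (Finset.union_subset hAsub hBsub)
    have h3 : n + 1 ≤ G.degree x + G.degree y := hcardV ▸ hdeg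
    omega
  obtain ⟨i, hiAB⟩ := hinter
  rw [Finset.mem_inter] at hiAB
  have hiA := hiAB.1
  have hiB := hiAB.2
  rw [hA, Finset.mem_filter, Finset.mem_range] at hiA
  rw [hB, Finset.mem_filter, Finset.mem_range] at hiB
  obtain ⟨hin, hix⟩ := hiA
  obtain ⟨-, hiy⟩ := hiB
  have hia : i ≠ a := fun h => haA (h ▸ hiAB.1)
  -- common facts
  have hheadC₁ : C₁.head? = some u := by
    rw [hl12, List.head?_append_of_ne_nil _ hC₁ne] at hhead
    exact hhead
  have hlastC₂ : C₂.getLast? = some v := by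
    rw [hl12, getLast?_append_right' _ _ hC₂ne] at hlast
    exact hlast
  have hC₁last : C₁.getLast? = some x := by rw [hC₁]; exact List.getLast?_concat
  have hC₂head : C₂.head? = some y := rfl
  rcases Nat.lt_or_ge i a with hcase | hcase
  · -- case i < a : splice inside C₁
    set P := C₁.take (i+1) with hP
    set Q := C₁.drop (i+1) with hQ
    have hPQ : P ++ Q = C₁ := List.take_append_drop _ _
    have hQlen : Q.length = a - i := by rw [hQ, List.length_drop, hC₁len]; omega
    have hQne : Q ≠ [] := List.ne_nil_of_length_pos (by omega)
    have hPlen : P.length = i + 1 := by rw [hP, List.length_take, hC₁len]; omega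
    have hPne : P ≠ [] := List.ne_nil_of_length_pos (by omega)
    have hiC₁ : i < C₁.length := by omega
    have hi1C₁ : i + 1 < C₁.length := by omega
    have hfil : ∀ k, (hk : k < C₁.length) → f k = C₁[k] := by
      intro k hk
      simp only [hf]
      rw [hl12, List.getD_append _ _ _ _ hk, List.getD_eq_getElem _ _ hk]
    have hPlast : P.getLast? = some (f i) := by
      have h := List.take_concat_get hiC₁
      rw [List.concat_eq_append] at h
      rw [hP, ← h, List.getLast?_concat, hfil i hiC₁]
    have hQhead : Q.head? = some (f (i+1)) := by
      rw [hQ, List.drop_eq_getElem_cons hi1C₁]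
      simp only [List.head?_cons]
      rw [hfil (i+1) hi1C₁]
    have hQlast : Q.getLast? = some x := by
      rw [← getLast?_append_right' P Q hQne, hPQ]
      exact hC₁last
    have hperm : (P ++ (Q.reverse ++ C₂)).Perm l := by
      rw [hl12, ← hPQ, List.append_assoc]
      exact List.Perm.append_left P ((Q.reverse_perm).append_right C₂)
    have hPhead : P.head? = some u := by
      rw [hP, head?_take_succ']
      exact hheadC₁
    refine ⟨P ++ (Q.reverse ++ C₂), ?_, ?_, ?_, ?_, ?_⟩
    · refine splice_chain' P Q C₂ (hC₁G.take _) (hC₁G.drop _) hC₂G hQne ?_ ?_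
      · intro p hp q hq
        simp only [hPlast, Option.mem_def, Option.some.injEq] at hp
        simp only [hQlast, Option.mem_def, Option.some.injEq] at hq
        subst hp; subst hq
        exact hix.symm
      · intro p hp q hq
        simp only [hQhead, Option.mem_def, Option.some.injEq] at hp
        simp only [hC₂head, Option.mem_def, Option.some.injEq] at hq
        subst hp; subst hq
        exact hiy.symm
    · rw [List.head?_append_of_ne_nil _ hPne]
      exact hPhead
    · rw [getLast?_append_right' _ _ (by simp [hC₂ne]), getLast?_append_right' _ _ hC₂ne]
      exact hlastC₂
    · exact (hperm.nodup_iff).2 hnodup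
    · intro w
      exact (hperm.mem_iff).2 (hcov w)
  · -- case a < i : splice inside C₂
    have hai : a < i := lt_of_le_of_ne hcase (Ne.symm hia)
    set j := i - a with hjdef
    have hj1 : 1 ≤ j := by omega
    have hjlt : j < C₂.length := by rw [hC₂len]; omega
    set Q := C₂.take j with hQ
    set R' := C₂.drop j with hR'
    have hQR : Q ++ R' = C₂ := List.take_append_drop _ _
    have hQlen : Q.length = j := by rw [hQ, List.length_take]; omega
    have hQne : Q ≠ [] := List.ne_nil_of_length_pos (by omega)
    have hR'len : R'.length = C₂.length - j := by rw [hR', List.length_drop]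
    have hR'ne : R' ≠ [] := List.ne_nil_of_length_pos (by omega)
    have hfC₂ : ∀ k, (hk : k < C₂.length) → f (a + 1 + k) = C₂[k] := by
      intro k hk
      simp only [hf]
      rw [hl12, List.getD_append_right _ _ _ _ (by rw [hC₁len]; omega)]
      have h : a + 1 + k - C₁.length = k := by rw [hC₁len]; omega
      rw [h, List.getD_eq_getElem _ _ hk]
    have hQhead : Q.head? = some y := by
      obtain ⟨j', hj'⟩ : ∃ j', j = j' + 1 := ⟨j - 1, by omega⟩
      rw [hQ, hj', head?_take_succ']
      exact hC₂head
    have hjm1 : j - 1 < C₂.length := by omega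
    have hQlast : Q.getLast? = some (f i) := by
      have h := List.take_concat_get hjm1
      rw [List.concat_eq_append] at h
      have hj11 : j - 1 + 1 = j := by omega
      rw [hj11] at h
      rw [hQ, ← h, List.getLast?_concat]
      rw [← hfC₂ (j-1) hjm1]
      have : a + 1 + (j - 1) = i := by omega
      rw [this]
    have hR'head : R'.head? = some (f (i+1)) := by
      rw [hR', List.drop_eq_getElem_cons hjlt]
      simp only [List.head?_cons]
      rw [← hfC₂ j hjlt]
      have : a + 1 + j = i + 1 := by omega
      rw [this]
    have hR'last : R'.getLast? = some v := by
      rw [← getLast?_append_right' Q R' hR'ne, hQR]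
      exact hlastC₂
    have hperm : (C₁ ++ (Q.reverse ++ R')).Perm l := by
      rw [hl12, ← hQR]
      exact List.Perm.append_left C₁ ((Q.reverse_perm).append_right R')
    refine ⟨C₁ ++ (Q.reverse ++ R'), ?_, ?_, ?_, ?_, ?_⟩
    · refine splice_chain' C₁ Q R' hC₁G (hC₂G.take _) (hC₂G.drop _) hQne ?_ ?_
      · intro p hp q hq
        simp only [hC₁last, Option.mem_def, Option.some.injEq] at hp
        simp only [hQlast, Option.mem_def, Option.some.injEq] at hq
        subst hp; subst hq
        exact hix
      · intro p hp q hq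
        simp only [hQhead, Option.mem_def, Option.some.injEq] at hp
        simp only [hR'head, Option.mem_def, Option.some.injEq] at hq
        subst hp; subst hq
        exact hiy
    · rw [List.head?_append_of_ne_nil _ hC₁ne]
      exact hheadC₁
    · rw [getLast?_append_right' _ _ (by simp [hR'ne]), getLast?_append_right' _ _ hR'ne]
      exact hR'last
    · exact (hperm.nodup_iff).2 hnodup
    · intro w
      exact (hperm.mem_iff).2 (hcov w)

lemma closure_main (x y : V) (hxy : x ≠ y) (hnadj : ¬ G.Adj x y)
    (hdeg : Fintype.card V + 1 ≤ G.degree x + G.degree y)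
    (u v : V) (l : List V) (hham : HamList' (G ⊔ fromEdgeSet {s(x,y)}) u v l) :
    ∃ l', HamList' G u v l' := by
  obtain ⟨hchain, hhead, hlast, hnodup, hcov⟩ := hham
  by_cases hch : l.Chain' G.Adj
  · exact ⟨l, hch, hhead, hlast, hnodup, hcov⟩
  · obtain ⟨L, R, c, d, hdec, hG', hnG⟩ := exists_bad_pair' l hchain hch
    rw [SimpleGraph.sup_adj] at hG'
    rcases hG' with h | h
    · exact absurd h hnG
    · rw [SimpleGraph.fromEdgeSet_adj] at h
      simp only [Set.mem_singleton_iff, Sym2.eq_iff] at h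
      obtain ⟨⟨rfl, rfl⟩ | ⟨rfl, rfl⟩, hne⟩ := h
      · exact closure_step c d hxy hnadj hdeg u v L R
          (hdec ▸ ⟨hchain, hhead, hlast, hnodup, hcov⟩)
      · have hswap : (G ⊔ fromEdgeSet {s(c, d)}) = (G ⊔ fromEdgeSet {s(d, c)}) := by
          rw [Sym2.eq_swap]
        exact closure_step c d hxy.symm (fun h' => hnadj h'.symm) (by omega) u v L R
          (by rw [hswap]; exact hdec ▸ ⟨hchain, hhead, hlast, hnodup, hcov⟩)

lemma key : ∀ (k : ℕ) (H : SimpleGraph V) (instH : DecidableRel H.Adj),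
    (Hᶜ.edgeSet).ncard ≤ k → (∀ w, Fintype.card V + 1 ≤ 2 * H.degree w) →
    ∀ u v : V, u ≠ v → ∃ l, HamList' H u v l := by
  intro k
  induction k with
  | zero =>
      intro H instH hcard hdeg u v huv
      apply hamList_of_complete' _ u v huv
      intro x y hxy
      by_contra hnadj
      have h1 : s(x,y) ∈ Hᶜ.edgeSet := by
        rw [SimpleGraph.mem_edgeSet, SimpleGraph.compl_adj]
        exact ⟨hxy, hnadj⟩
      have h2 : Hᶜ.edgeSet = ∅ := by
        rw [← Set.ncard_eq_zero (Set.toFinite _)]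
        omega
      rw [h2] at h1
      exact h1
  | succ k ih =>
      intro H instH hcard hdeg u v huv
      by_cases hc : ∀ x y : V, x ≠ y → H.Adj x y
      · exact hamList_of_complete' hc u v huv
      · push_neg at hc
        obtain ⟨x, y, hxy, hnadj⟩ := hc
        set H' := H ⊔ fromEdgeSet {s(x,y)} with hH'
        haveI instH' : DecidableRel H'.Adj := Classical.decRel _
        have hle : H ≤ H' := le_sup_left
        have hcadj : H'.Adj x y := by
          rw [hH', SimpleGraph.sup_adj, SimpleGraph.fromEdgeSet_adj]
          exact Or.inr ⟨rfl, hxy⟩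
        have hss : H'ᶜ.edgeSet ⊂ Hᶜ.edgeSet := by
          constructor
          · intro e he
            induction e with
            | h a b =>
                rw [SimpleGraph.mem_edgeSet, SimpleGraph.compl_adj] at he ⊢
                exact ⟨he.1, fun h => he.2 (hle h)⟩
          · intro hsub
            have h1 : s(x,y) ∈ Hᶜ.edgeSet := by
              rw [SimpleGraph.mem_edgeSet, SimpleGraph.compl_adj]
              exact ⟨hxy, hnadj⟩
            have h2 := hsub h1
            rw [SimpleGraph.mem_edgeSet, SimpleGraph.compl_adj] at h2
            exact h2.2 hcadj
        have hcard' : H'ᶜ.edgeSet.ncard ≤ k := by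
          have := Set.ncard_lt_ncard hss (Set.toFinite _)
          omega
        have hdeg' : ∀ w, Fintype.card V + 1 ≤ 2 * H'.degree w := by
          intro w
          refine le_trans (hdeg w) ?_
          have hmon : H.degree w ≤ H'.degree w := by
            rw [← SimpleGraph.card_neighborFinset_eq_degree,
              ← SimpleGraph.card_neighborFinset_eq_degree]
            apply Finset.card_le_card
            intro z hz
            rw [SimpleGraph.mem_neighborFinset] at hz ⊢
            exact hle hz
          omega
        obtain ⟨l, hl⟩ := ih H' instH' hcard' hdeg' u v huv
        have hdxy : Fintype.card V + 1 ≤ H.degree x + H.degree y := by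
          have h1 := hdeg x; have h2 := hdeg y; omega
        exact closure_main x y hxy hnadj hdxy u v l hl

end Big

theorem stmt_14 [Fintype V] (G : SimpleGraph V) [DecidableRel G.Adj]
    (hδ : ((Fintype.card V : ℝ) + 1) / 2 ≤ G.minDegree) :
    ∀ u v : V, u ≠ v → ∃ p : G.Walk u v, p.IsPath ∧ ∀ w : V, w ∈ p.support := by
  classical
  intro u v huv
  have hmind : Fintype.card V + 1 ≤ 2 * G.minDegree := by
    rw [div_le_iff₀ (by norm_num : (0:ℝ) < 2)] at hδ
    have h2 : ((Fintype.card V + 1 : ℕ) : ℝ) ≤ ((2 * G.minDegree : ℕ) : ℝ) := by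
      push_cast
      linarith
    exact_mod_cast h2
  have hdeg : ∀ w, Fintype.card V + 1 ≤ 2 * G.degree w := fun w =>
    le_trans hmind (by have := G.minDegree_le_degree w; omega)
  have hkey := key (V := V) (Gᶜ.edgeSet.ncard) G ‹DecidableRel G.Adj› le_rfl
  have hkey2 := hkey hdeg u v huv
  obtain ⟨l, hchain, hhead, hlast, hnodup, hcov⟩ := hkey2
  cases l with
  | nil => simp at hhead
  | cons w t =>
      have hw : w = u := by simpa using hhead
      subst hw
      obtain ⟨p, hp⟩ := walk_of_chain' t w v hchain hlast
      refine ⟨p, SimpleGraph.Walk.IsPath.mk' (by rw [hp]; exact hnodup), fun w' => by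
        rw [hp]; exact hcov w'⟩
end

section
/- Let G be a connected graph and let H be a bipartite spanning subgraph of G with the maximum number of edges. Let e = x1x2 be a cut-edge of H, and let I1, I2 be the two components of H − e, each containing at least 2 vertices, with bipartitions (U1,V1), (U2,V2) chosen so that x1 ∈ U1 and x2 ∈ U2. Then E_G(U1,U2) ∪ E_G(V1,V2) = {e} and |E_G(U1,V2) ∪ E_G(V1,U2)| ≤ 1; in particular, the number of edges of G between V(I1) and V(I2) is at most 2. -/
open SimpleGraph

variable {V : Type*}

/-- The set of edges of `G` with one end in `X` and the other in `Y`. -/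
def eBetween (G : SimpleGraph V) (X Y : Set V) : Set (Sym2 V) :=
  {e | ∃ a ∈ X, ∃ b ∈ Y, G.Adj a b ∧ e = s(a, b)}

theorem stmt_15 [Fintype V] (G H : SimpleGraph V) (hG : G.Connected) (hHG : H ≤ G)
    (hbip : H.Colorable 2)
    (hmax : ∀ H' : SimpleGraph V, H' ≤ G → H'.Colorable 2 →
      H'.edgeSet.ncard ≤ H.edgeSet.ncard)
    (x₁ x₂ : V) (hbr : H.IsBridge s(x₁, x₂))
    (I₁ I₂ U₁ V₁ U₂ V₂ : Set V)
    (hI₁ : I₁ = {w | (H.deleteEdges {s(x₁, x₂)}).Reachable x₁ w})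
    (hI₂ : I₂ = {w | (H.deleteEdges {s(x₁, x₂)}).Reachable x₂ w})
    (hc₁ : 2 ≤ I₁.ncard) (hc₂ : 2 ≤ I₂.ncard)
    (hp₁ : U₁ ∪ V₁ = I₁) (hd₁ : Disjoint U₁ V₁)
    (hp₂ : U₂ ∪ V₂ = I₂) (hd₂ : Disjoint U₂ V₂)
    (hx₁ : x₁ ∈ U₁) (hx₂ : x₂ ∈ U₂)
    (hbip₁ : ∀ a b : V, a ∈ I₁ → b ∈ I₁ → H.Adj a b →
      (a ∈ U₁ ∧ b ∈ V₁) ∨ (a ∈ V₁ ∧ b ∈ U₁))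
    (hbip₂ : ∀ a b : V, a ∈ I₂ → b ∈ I₂ → H.Adj a b →
      (a ∈ U₂ ∧ b ∈ V₂) ∨ (a ∈ V₂ ∧ b ∈ U₂)) :
    eBetween G U₁ U₂ ∪ eBetween G V₁ V₂ = {s(x₁, x₂)} ∧
    (eBetween G U₁ V₂ ∪ eBetween G V₁ U₂).ncard ≤ 1 ∧
    (eBetween G I₁ I₂).ncard ≤ 2 := by
  classical
  have hbr' := (SimpleGraph.isBridge_iff).mp hbr
  have hedge_le' : ∀ a b : V, G.Adj a b → SimpleGraph.edge a b ≤ G := by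
    intro a b hab u w h
    rw [SimpleGraph.edge_adj] at h
    rcases h.1 with ⟨rfl, rfl⟩ | ⟨rfl, rfl⟩
    · exact hab
    · exact hab.symm
  have hHadj : H.Adj x₁ x₂ := by
    by_contra hna
    obtain ⟨c⟩ := id hbip
    have hdel : H.deleteEdges {s(x₁, x₂)} = H := by
      rw [SimpleGraph.deleteEdges_eq_self]
      exact Set.disjoint_singleton_right.mpr hna
    have hnr0 : ¬ H.Reachable x₁ x₂ := by
      intro h; apply hbr'; rw [hdel]; exact h
    obtain ⟨p⟩ := hG.preconnected x₁ x₂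
    obtain ⟨d, -, hd1, hd2⟩ :=
      p.exists_boundary_dart {w | H.Reachable x₁ w} (Reachable.refl _) hnr0
    have hd1' : H.Reachable x₁ d.fst := hd1
    have hd2' : ¬ H.Reachable x₁ d.snd := hd2
    have hab : G.Adj d.fst d.snd := d.adj
    set f : V → Fin 2 := fun v => if H.Reachable x₁ v then c v else c v + c d.snd + c d.fst + 1
      with hf
    have hcol : (H ⊔ SimpleGraph.edge d.fst d.snd).Colorable 2 := by
      refine ⟨SimpleGraph.Coloring.mk f ?_⟩
      intro u w huw
      rcases huw with h | h
      · by_cases hu : H.Reachable x₁ u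
        · have hw : H.Reachable x₁ w := hu.trans h.reachable
          simp only [hf]; rw [if_pos hu, if_pos hw]; exact c.valid h
        · have hw : ¬ H.Reachable x₁ w := fun hw => hu (hw.trans h.symm.reachable)
          simp only [hf]; rw [if_neg hu, if_neg hw]
          intro heq; exact c.valid h (add_right_cancel (add_right_cancel (add_right_cancel heq)))
      · rw [SimpleGraph.edge_adj] at h
        have key : ∀ p q : Fin 2, p ≠ q + q + p + 1 := by decide
        rcases h.1 with ⟨hu, hw⟩ | ⟨hu, hw⟩
        · simp only [hf]; rw [hu, hw, if_pos hd1', if_neg hd2']; exact key _ _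
        · simp only [hf]; rw [hu, hw, if_pos hd1', if_neg hd2']; exact (key _ _).symm
    have hle : H ⊔ SimpleGraph.edge d.fst d.snd ≤ G := sup_le hHG (hedge_le' d.fst d.snd hab)
    have hnot : s(d.fst, d.snd) ∉ H.edgeSet :=
      fun hmem => hd2' (hd1'.trans ((SimpleGraph.mem_edgeSet H).mp hmem).reachable)
    have hss : H.edgeSet ⊂ (H ⊔ SimpleGraph.edge d.fst d.snd).edgeSet := by
      rw [SimpleGraph.edgeSet_sup, SimpleGraph.edge_edgeSet_of_ne hab.ne]
      rw [Set.ssubset_iff_of_subset Set.subset_union_left]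
      exact ⟨s(d.fst, d.snd), Set.mem_union_right _ rfl, hnot⟩
    exact absurd (hmax _ hle hcol) (not_le.mpr (Set.ncard_lt_ncard hss (Set.toFinite _)))
  have hnr : ¬ (H.deleteEdges {s(x₁, x₂)}).Reachable x₁ x₂ := hbr'
  have hmemI₁ : x₁ ∈ I₁ := by rw [hI₁]; exact Reachable.refl x₁
  have hmemI₂ : x₂ ∈ I₂ := by rw [hI₂]; exact Reachable.refl x₂
  have hdisjI : ∀ ⦃v : V⦄, v ∈ I₁ → v ∈ I₂ → False := by
    intro v h1 h2
    rw [hI₁] at h1; rw [hI₂] at h2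
    exact hnr (Reachable.trans h1 (Reachable.symm h2))
  have hclass : ∀ u w : V, H.Adj u w → s(u, w) = s(x₁, x₂) ∨ (u ∈ I₁ ∧ w ∈ I₁) ∨
      (u ∈ I₂ ∧ w ∈ I₂) ∨ (u ∉ I₁ ∧ u ∉ I₂ ∧ w ∉ I₁ ∧ w ∉ I₂) := by
    intro u w h
    by_cases hs : s(u, w) = s(x₁, x₂)
    · exact Or.inl hs
    · have hD : (H.deleteEdges {s(x₁, x₂)}).Adj u w := by
        rw [SimpleGraph.deleteEdges_adj]; exact ⟨h, by simpa using hs⟩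
      have hiff₁ : u ∈ I₁ ↔ w ∈ I₁ := by
        rw [hI₁]; simp only [Set.mem_setOf_eq]
        exact ⟨fun hu => hu.trans hD.reachable, fun hw => hw.trans hD.symm.reachable⟩
      have hiff₂ : u ∈ I₂ ↔ w ∈ I₂ := by
        rw [hI₂]; simp only [Set.mem_setOf_eq]
        exact ⟨fun hu => hu.trans hD.reachable, fun hw => hw.trans hD.symm.reachable⟩
      by_cases h1 : u ∈ I₁
      · exact Or.inr (Or.inl ⟨h1, hiff₁.mp h1⟩)
      by_cases h2 : u ∈ I₂
      · exact Or.inr (Or.inr (Or.inl ⟨h2, hiff₂.mp h2⟩))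
      · exact Or.inr (Or.inr (Or.inr ⟨h1, h2, fun hw => h1 (hiff₁.mpr hw),
          fun hw => h2 (hiff₂.mpr hw)⟩))
  have hU₁I : ∀ ⦃v : V⦄, v ∈ U₁ → v ∈ I₁ := fun v hv => hp₁ ▸ Set.mem_union_left _ hv
  have hV₁I : ∀ ⦃v : V⦄, v ∈ V₁ → v ∈ I₁ := fun v hv => hp₁ ▸ Set.mem_union_right _ hv
  have hU₂I : ∀ ⦃v : V⦄, v ∈ U₂ → v ∈ I₂ := fun v hv => hp₂ ▸ Set.mem_union_left _ hv
  have hV₂I : ∀ ⦃v : V⦄, v ∈ V₂ → v ∈ I₂ := fun v hv => hp₂ ▸ Set.mem_union_right _ hv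
  have hnadj : ∀ a b : V, a ∈ I₁ → b ∈ I₂ → s(a, b) ≠ s(x₁, x₂) → ¬ H.Adj a b := by
    intro a b ha hb hne hadj
    rcases hclass a b hadj with hs | ⟨h1, h2⟩ | ⟨h1, h2⟩ | ⟨h1, _, _, _⟩
    · exact hne hs
    · exact hdisjI h2 hb
    · exact hdisjI ha h1
    · exact h1 ha
  have hedge_le : ∀ a b : V, G.Adj a b → SimpleGraph.edge a b ≤ G := by
    intro a b hab u w h
    rw [SimpleGraph.edge_adj] at h
    rcases h.1 with ⟨rfl, rfl⟩ | ⟨rfl, rfl⟩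
    · exact hab
    · exact hab.symm
  obtain ⟨c⟩ := hbip
  -- Claim 1 core
  have key1 : ∀ a b : V, G.Adj a b → ((a ∈ U₁ ∧ b ∈ U₂) ∨ (a ∈ V₁ ∧ b ∈ V₂)) →
      s(a, b) = s(x₁, x₂) := by
    intro a b hab hcase
    by_contra hne
    have haI : a ∈ I₁ := hcase.elim (fun h => hU₁I h.1) (fun h => hV₁I h.1)
    have hbI : b ∈ I₂ := hcase.elim (fun h => hU₂I h.2) (fun h => hV₂I h.2)
    set f : V → Fin 2 := fun v => if v ∈ U₁ ∪ V₂ then 0 else if v ∈ I₁ ∪ I₂ then 1 else c v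
      with hf
    have hf0 : ∀ v : V, v ∈ U₁ ∨ v ∈ V₂ → f v = 0 := by
      intro v hv; simp only [hf]; rw [if_pos ((Set.mem_union _ _ _).mpr hv)]
    have hf1 : ∀ v : V, v ∈ V₁ ∨ v ∈ U₂ → f v = 1 := by
      intro v hv
      have hvI : v ∈ I₁ ∪ I₂ :=
        hv.elim (fun h => Set.mem_union_left _ (hV₁I h)) (fun h => Set.mem_union_right _ (hU₂I h))
      have hnv : v ∉ U₁ ∪ V₂ := by
        rintro (h | h)
        · rcases hv with hv | hv
          · exact Set.disjoint_left.mp hd₁ h hv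
          · exact hdisjI (hU₁I h) (hU₂I hv)
        · rcases hv with hv | hv
          · exact hdisjI (hV₁I hv) (hV₂I h)
          · exact Set.disjoint_left.mp hd₂ hv h
      simp only [hf]; rw [if_neg hnv, if_pos hvI]
    have hfc : ∀ v : V, v ∉ I₁ → v ∉ I₂ → f v = c v := by
      intro v h1 h2
      have hnv : v ∉ U₁ ∪ V₂ := by rintro (h | h); exacts [h1 (hU₁I h), h2 (hV₂I h)]
      have hnv2 : v ∉ I₁ ∪ I₂ := by rintro (h | h); exacts [h1 h, h2 h]
      simp only [hf]; rw [if_neg hnv, if_neg hnv2]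
    have hcol : (H ⊔ SimpleGraph.edge a b).Colorable 2 := by
      refine ⟨SimpleGraph.Coloring.mk f ?_⟩
      intro u w huw
      rcases huw with h | h
      · rcases hclass u w h with hs | ⟨h1, h2⟩ | ⟨h1, h2⟩ | ⟨h1, h2, h3, h4⟩
        · rw [Sym2.eq_iff] at hs
          rcases hs with ⟨hu, hw⟩ | ⟨hu, hw⟩
          · rw [hu, hw, hf0 x₁ (Or.inl hx₁), hf1 x₂ (Or.inr hx₂)]; decide
          · rw [hu, hw, hf1 x₂ (Or.inr hx₂), hf0 x₁ (Or.inl hx₁)]; decide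
        · rcases hbip₁ u w h1 h2 h with ⟨ha', hb'⟩ | ⟨ha', hb'⟩
          · rw [hf0 u (Or.inl ha'), hf1 w (Or.inl hb')]; decide
          · rw [hf1 u (Or.inl ha'), hf0 w (Or.inl hb')]; decide
        · rcases hbip₂ u w h1 h2 h with ⟨ha', hb'⟩ | ⟨ha', hb'⟩
          · rw [hf1 u (Or.inr ha'), hf0 w (Or.inr hb')]; decide
          · rw [hf0 u (Or.inr ha'), hf1 w (Or.inr hb')]; decide
        · rw [hfc u h1 h2, hfc w h3 h4]; exact c.valid h
      · rw [SimpleGraph.edge_adj] at h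
        rcases h.1 with ⟨hu, hw⟩ | ⟨hu, hw⟩ <;>
          rcases hcase with ⟨hA, hB⟩ | ⟨hA, hB⟩
        · rw [hu, hw, hf0 a (Or.inl hA), hf1 b (Or.inr hB)]; decide
        · rw [hu, hw, hf1 a (Or.inl hA), hf0 b (Or.inr hB)]; decide
        · rw [hu, hw, hf1 b (Or.inr hB), hf0 a (Or.inl hA)]; decide
        · rw [hu, hw, hf0 b (Or.inr hB), hf1 a (Or.inl hA)]; decide
    have hle : H ⊔ SimpleGraph.edge a b ≤ G := sup_le hHG (hedge_le a b hab)
    have hnot : s(a, b) ∉ H.edgeSet :=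
      fun hmem => hnadj a b haI hbI hne ((SimpleGraph.mem_edgeSet H).mp hmem)
    have hss : H.edgeSet ⊂ (H ⊔ SimpleGraph.edge a b).edgeSet := by
      rw [SimpleGraph.edgeSet_sup, SimpleGraph.edge_edgeSet_of_ne hab.ne]
      rw [Set.ssubset_iff_of_subset Set.subset_union_left]
      exact ⟨s(a, b), Set.mem_union_right _ rfl, hnot⟩
    exact absurd (hmax _ hle hcol) (not_le.mpr (Set.ncard_lt_ncard hss (Set.toFinite _)))
  have goal1 : eBetween G U₁ U₂ ∪ eBetween G V₁ V₂ = {s(x₁, x₂)} := by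
    refine Set.eq_singleton_iff_unique_mem.mpr ⟨?_, ?_⟩
    · exact Or.inl ⟨x₁, hx₁, x₂, hx₂, hHG hHadj, rfl⟩
    · rintro y (⟨a, ha, b, hb, hab, rfl⟩ | ⟨a, ha, b, hb, hab, rfl⟩)
      · exact key1 a b hab (Or.inl ⟨ha, hb⟩)
      · exact key1 a b hab (Or.inr ⟨ha, hb⟩)
  -- Claim 2 core
  have hne_e : ∀ a b : V, ((a ∈ U₁ ∧ b ∈ V₂) ∨ (a ∈ V₁ ∧ b ∈ U₂)) →
      s(a, b) ≠ s(x₁, x₂) := by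
    intro a b hcase heq
    rw [Sym2.eq_iff] at heq
    rcases heq with ⟨ha, hb⟩ | ⟨ha, hb⟩
    · rcases hcase with ⟨h1, h2⟩ | ⟨h1, h2⟩
      · exact Set.disjoint_left.mp hd₂ hx₂ (hb ▸ h2)
      · exact Set.disjoint_left.mp hd₁ hx₁ (ha ▸ h1)
    · exact hdisjI (hcase.elim (fun h => hU₁I h.1) (fun h => hV₁I h.1)) (ha ▸ hmemI₂)
  have repr2 : ∀ p ∈ eBetween G U₁ V₂ ∪ eBetween G V₁ U₂, ∃ a b : V, G.Adj a b ∧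
      p = s(a, b) ∧ ((a ∈ U₁ ∧ b ∈ V₂) ∨ (a ∈ V₁ ∧ b ∈ U₂)) := by
    rintro p (⟨a, ha, b, hb, hab, rfl⟩ | ⟨a, ha, b, hb, hab, rfl⟩)
    · exact ⟨a, b, hab, rfl, Or.inl ⟨ha, hb⟩⟩
    · exact ⟨a, b, hab, rfl, Or.inr ⟨ha, hb⟩⟩
  have key2 : ∀ p ∈ eBetween G U₁ V₂ ∪ eBetween G V₁ U₂,
      ∀ q ∈ eBetween G U₁ V₂ ∪ eBetween G V₁ U₂, p = q := by
    intro p hp q hq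
    obtain ⟨a₁, b₁, hab₁, hpe, hcase₁⟩ := repr2 p hp
    obtain ⟨a₂, b₂, hab₂, hqe, hcase₂⟩ := repr2 q hq
    by_contra hpq
    have ha₁I : a₁ ∈ I₁ := hcase₁.elim (fun h => hU₁I h.1) (fun h => hV₁I h.1)
    have hb₁I : b₁ ∈ I₂ := hcase₁.elim (fun h => hV₂I h.2) (fun h => hU₂I h.2)
    have ha₂I : a₂ ∈ I₁ := hcase₂.elim (fun h => hU₁I h.1) (fun h => hV₁I h.1)
    have hb₂I : b₂ ∈ I₂ := hcase₂.elim (fun h => hV₂I h.2) (fun h => hU₂I h.2)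
    set H' : SimpleGraph V :=
      (H.deleteEdges {s(x₁, x₂)} ⊔ SimpleGraph.edge a₁ b₁) ⊔ SimpleGraph.edge a₂ b₂ with hH'
    set g : V → Fin 2 := fun v => if v ∈ U₁ ∪ U₂ then 0 else if v ∈ I₁ ∪ I₂ then 1 else c v
      with hg
    have hg0 : ∀ v : V, v ∈ U₁ ∨ v ∈ U₂ → g v = 0 := by
      intro v hv; simp only [hg]; rw [if_pos ((Set.mem_union _ _ _).mpr hv)]
    have hg1 : ∀ v : V, v ∈ V₁ ∨ v ∈ V₂ → g v = 1 := by
      intro v hv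
      have hvI : v ∈ I₁ ∪ I₂ :=
        hv.elim (fun h => Set.mem_union_left _ (hV₁I h)) (fun h => Set.mem_union_right _ (hV₂I h))
      have hnv : v ∉ U₁ ∪ U₂ := by
        rintro (h | h)
        · rcases hv with hv | hv
          · exact Set.disjoint_left.mp hd₁ h hv
          · exact hdisjI (hU₁I h) (hV₂I hv)
        · rcases hv with hv | hv
          · exact hdisjI (hV₁I hv) (hU₂I h)
          · exact Set.disjoint_left.mp hd₂ h hv
      simp only [hg]; rw [if_neg hnv, if_pos hvI]
    have hgc : ∀ v : V, v ∉ I₁ → v ∉ I₂ → g v = c v := by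
      intro v h1 h2
      have hnv : v ∉ U₁ ∪ U₂ := by rintro (h | h); exacts [h1 (hU₁I h), h2 (hU₂I h)]
      have hnv2 : v ∉ I₁ ∪ I₂ := by rintro (h | h); exacts [h1 h, h2 h]
      simp only [hg]; rw [if_neg hnv, if_neg hnv2]
    have hedgecase : ∀ a b : V, ((a ∈ U₁ ∧ b ∈ V₂) ∨ (a ∈ V₁ ∧ b ∈ U₂)) →
        ∀ u w : V, (SimpleGraph.edge a b).Adj u w → g u ≠ g w := by
      intro a b hcase u w h
      rw [SimpleGraph.edge_adj] at h
      rcases h.1 with ⟨hu, hw⟩ | ⟨hu, hw⟩ <;> rcases hcase with ⟨hA, hB⟩ | ⟨hA, hB⟩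
      · rw [hu, hw, hg0 a (Or.inl hA), hg1 b (Or.inr hB)]; decide
      · rw [hu, hw, hg1 a (Or.inl hA), hg0 b (Or.inr hB)]; decide
      · rw [hu, hw, hg1 b (Or.inr hB), hg0 a (Or.inl hA)]; decide
      · rw [hu, hw, hg0 b (Or.inr hB), hg1 a (Or.inl hA)]; decide
    have hcol : H'.Colorable 2 := by
      refine ⟨SimpleGraph.Coloring.mk g ?_⟩
      intro u w huw
      rcases huw with (h | h) | h
      · rw [SimpleGraph.deleteEdges_adj] at h
        rcases hclass u w h.1 with hs | ⟨h1, h2⟩ | ⟨h1, h2⟩ | ⟨h1, h2, h3, h4⟩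
        · exact absurd hs (by simpa using h.2)
        · rcases hbip₁ u w h1 h2 h.1 with ⟨ha', hb'⟩ | ⟨ha', hb'⟩
          · rw [hg0 u (Or.inl ha'), hg1 w (Or.inl hb')]; decide
          · rw [hg1 u (Or.inl ha'), hg0 w (Or.inl hb')]; decide
        · rcases hbip₂ u w h1 h2 h.1 with ⟨ha', hb'⟩ | ⟨ha', hb'⟩
          · rw [hg0 u (Or.inr ha'), hg1 w (Or.inr hb')]; decide
          · rw [hg1 u (Or.inr ha'), hg0 w (Or.inr hb')]; decide
        · rw [hgc u h1 h2, hgc w h3 h4]; exact c.valid h.1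
      · exact hedgecase a₁ b₁ hcase₁ u w h
      · exact hedgecase a₂ b₂ hcase₂ u w h
    have hle : H' ≤ G :=
      sup_le (sup_le ((H.deleteEdges_le _).trans hHG) (hedge_le a₁ b₁ hab₁))
        (hedge_le a₂ b₂ hab₂)
    have hnm₁ : s(a₁, b₁) ∉ H.edgeSet := fun hmem =>
      hnadj a₁ b₁ ha₁I hb₁I (hne_e a₁ b₁ hcase₁) ((SimpleGraph.mem_edgeSet H).mp hmem)
    have hnm₂ : s(a₂, b₂) ∉ H.edgeSet := fun hmem =>
      hnadj a₂ b₂ ha₂I hb₂I (hne_e a₂ b₂ hcase₂) ((SimpleGraph.mem_edgeSet H).mp hmem)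
    have he_mem : s(x₁, x₂) ∈ H.edgeSet := (SimpleGraph.mem_edgeSet H).mpr hHadj
    have hES : H'.edgeSet =
        ((H.edgeSet \ {s(x₁, x₂)}) ∪ {s(a₁, b₁)}) ∪ {s(a₂, b₂)} := by
      rw [hH', SimpleGraph.edgeSet_sup, SimpleGraph.edgeSet_sup,
        SimpleGraph.edgeSet_deleteEdges, SimpleGraph.edge_edgeSet_of_ne hab₁.ne,
        SimpleGraph.edge_edgeSet_of_ne hab₂.ne]
    have h1 : (H.edgeSet \ {s(x₁, x₂)}).ncard = H.edgeSet.ncard - 1 :=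
      Set.ncard_diff_singleton_of_mem he_mem
    have h2 : ((H.edgeSet \ {s(x₁, x₂)}) ∪ {s(a₁, b₁)}).ncard =
        (H.edgeSet \ {s(x₁, x₂)}).ncard + 1 := by
      rw [Set.union_singleton]
      exact Set.ncard_insert_of_notMem (fun h => hnm₁ h.1) (Set.toFinite _)
    have h3 : (((H.edgeSet \ {s(x₁, x₂)}) ∪ {s(a₁, b₁)}) ∪ {s(a₂, b₂)}).ncard =
        ((H.edgeSet \ {s(x₁, x₂)}) ∪ {s(a₁, b₁)}).ncard + 1 := by
      rw [Set.union_singleton]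
      refine Set.ncard_insert_of_notMem ?_ (Set.toFinite _)
      rintro (h | h)
      · exact hnm₂ h.1
      · exact hpq (by rw [hpe, hqe, Set.mem_singleton_iff.mp h])
    have hpos : 0 < H.edgeSet.ncard :=
      (Set.ncard_pos (Set.toFinite _)).mpr ⟨_, he_mem⟩
    have hlt : H.edgeSet.ncard < H'.edgeSet.ncard := by
      rw [hES, h3, h2, h1]; omega
    exact absurd (hmax _ hle hcol) (not_le.mpr hlt)
  have goal2 : (eBetween G U₁ V₂ ∪ eBetween G V₁ U₂).ncard ≤ 1 := by
    rcases Set.eq_empty_or_nonempty (eBetween G U₁ V₂ ∪ eBetween G V₁ U₂) with h | ⟨p, hp⟩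
    · rw [h]; simp
    · have hsub : eBetween G U₁ V₂ ∪ eBetween G V₁ U₂ ⊆ {p} := by
        intro q hq
        exact Set.mem_singleton_iff.mpr (key2 q hq p hp)
      calc (eBetween G U₁ V₂ ∪ eBetween G V₁ U₂).ncard
          ≤ ({p} : Set (Sym2 V)).ncard := Set.ncard_le_ncard hsub (Set.toFinite _)
        _ = 1 := Set.ncard_singleton p
  refine ⟨goal1, goal2, ?_⟩
  have hsub3 : eBetween G I₁ I₂ ⊆
      (eBetween G U₁ U₂ ∪ eBetween G V₁ V₂) ∪ (eBetween G U₁ V₂ ∪ eBetween G V₁ U₂) := by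
    rintro q ⟨a, ha, b, hb, hab, rfl⟩
    rw [← hp₁] at ha; rw [← hp₂] at hb
    rcases ha with ha | ha <;> rcases hb with hb | hb
    · exact Or.inl (Or.inl ⟨a, ha, b, hb, hab, rfl⟩)
    · exact Or.inr (Or.inl ⟨a, ha, b, hb, hab, rfl⟩)
    · exact Or.inr (Or.inr ⟨a, ha, b, hb, hab, rfl⟩)
    · exact Or.inl (Or.inr ⟨a, ha, b, hb, hab, rfl⟩)
  calc (eBetween G I₁ I₂).ncard
      ≤ ((eBetween G U₁ U₂ ∪ eBetween G V₁ V₂) ∪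
          (eBetween G U₁ V₂ ∪ eBetween G V₁ U₂)).ncard :=
        Set.ncard_le_ncard hsub3 (Set.toFinite _)
    _ ≤ (eBetween G U₁ U₂ ∪ eBetween G V₁ V₂).ncard +
          (eBetween G U₁ V₂ ∪ eBetween G V₁ U₂).ncard := Set.ncard_union_le _ _
    _ ≤ 1 + 1 := by
        rw [goal1]
        exact add_le_add (le_of_eq (Set.ncard_singleton _)) goal2
    _ = 2 := rfl
end

section
/- The minimum degree bound n/8 is not sufficient to force pc(G) = 2 for connected bipartite graphs: for n divisible by 8 (n ≥ 16), let G1, G2, G3, G4 be disjoint complete bipartite graphs K_{n/8,n/8}, pick v_i ∈ G_i, and join v1 to v2, v3, v4 by edges. The resulting graph G is a connected bipartite graph on n vertices with δ(G) = n/8 and pc(G) = 3. -/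
open SimpleGraph

variable {V : Type*}

namespace PC19

variable {m : ℕ}

abbrev VV (m : ℕ) := Fin 4 × (Fin m ⊕ Fin m)

def zz (hm : 2 ≤ m) : Fin m := ⟨0, (by omega : 0 + 0 < m)⟩
def on1 (hm : 2 ≤ m) : Fin m := ⟨1, by omega⟩
def v1 (hm : 2 ≤ m) : VV m := (0, Sum.inl (zz hm))

def myG (hm : 2 ≤ m) : SimpleGraph (VV m) := SimpleGraph.fromRel (fun x y =>
        (x.1 = y.1 ∧ x.2.isLeft ∧ y.2.isRight) ∨
        (x.1 = 0 ∧ x.2 = Sum.inl (zz hm) ∧ x.1 ≠ y.1 ∧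
          y.2 = Sum.inl (zz hm)))

lemma adj_iff (hm : 2 ≤ m) (x y : VV m) : (myG hm).Adj x y ↔ x ≠ y ∧
    (((x.1 = y.1 ∧ x.2.isLeft ∧ y.2.isRight) ∨
      (x.1 = 0 ∧ x.2 = Sum.inl (zz hm) ∧ x.1 ≠ y.1 ∧ y.2 = Sum.inl (zz hm))) ∨
     ((y.1 = x.1 ∧ y.2.isLeft ∧ x.2.isRight) ∨
      (y.1 = 0 ∧ y.2 = Sum.inl (zz hm) ∧ y.1 ≠ x.1 ∧ x.2 = Sum.inl (zz hm)))) :=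
  SimpleGraph.fromRel_adj _ x y

lemma adj_lr (hm : 2 ≤ m) (i : Fin 4) (a b : Fin m) :
    (myG hm).Adj (i, Sum.inl a) (i, Sum.inr b) := by
  rw [adj_iff]
  refine ⟨by simp, Or.inl (Or.inl ⟨rfl, by simp, by simp⟩)⟩

lemma adj_bridge (hm : 2 ≤ m) (j : Fin 4) (hj : j ≠ 0) :
    (myG hm).Adj (v1 hm) (j, Sum.inl (zz hm)) := by
  rw [adj_iff]
  exact ⟨by simp [v1, Prod.ext_iff, hj.symm], Or.inl (Or.inr ⟨rfl, rfl, by simpa [v1] using hj.symm, rfl⟩)⟩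

/-- structural case analysis of an edge -/
lemma adj_cases (hm : 2 ≤ m) {x y : VV m} (h : (myG hm).Adj x y) :
    x.1 = y.1 ∨ (x = v1 hm ∧ y.1 ≠ 0 ∧ y.2 = Sum.inl (zz hm))
      ∨ (y = v1 hm ∧ x.1 ≠ 0 ∧ x.2 = Sum.inl (zz hm)) := by
  rw [adj_iff] at h
  obtain ⟨-, h⟩ := h
  rcases h with (⟨h1, -⟩ | ⟨h1, h2, h3, h4⟩) | (⟨h1, -⟩ | ⟨h1, h2, h3, h4⟩)
  · exact Or.inl h1
  · exact Or.inr (Or.inl ⟨Prod.ext h1 h2, by rw [← h1]; exact fun hh => h3 hh.symm, h4⟩)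
  · exact Or.inl h1.symm
  · exact Or.inr (Or.inr ⟨Prod.ext h1 h2, by rw [← h1]; exact fun hh => h3 hh.symm, h4⟩)


/-- every walk between different blocks passes through v1 -/
lemma cut (hm : 2 ≤ m) : ∀ {x y : VV m} (w : (myG hm).Walk x y), x.1 ≠ y.1 →
    v1 hm ∈ w.support := by
  intro x y w
  induction w with
  | nil => intro h; exact absurd rfl h
  | @cons x z y h w ih =>
    intro hxy
    rcases adj_cases hm h with h1 | ⟨h1, -⟩ | ⟨h1, -⟩
    · rw [Walk.support_cons]
      exact List.mem_cons_of_mem _ (ih (h1 ▸ hxy))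
    · subst h1; exact Walk.start_mem_support _
    · subst h1
      exact List.mem_cons_of_mem _ (Walk.start_mem_support _)

/-- every walk leaving block k passes through (k, inl 0) -/
lemma cut2 (hm : 2 ≤ m) : ∀ {x y : VV m} (w : (myG hm).Walk x y), x.1 ≠ y.1 →
    (x.1, Sum.inl (zz hm)) ∈ w.support := by
  intro x y w
  induction w with
  | nil => intro h; exact absurd rfl h
  | @cons x z y h w ih =>
    intro hxy
    by_cases hx : x = (x.1, Sum.inl (zz hm))
    · have h2 : ((x.1 : Fin 4), Sum.inl (zz hm)) = x := hx.symm
      rw [h2, Walk.support_cons]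
      exact List.mem_cons_self
    rcases adj_cases hm h with h1 | ⟨h1, -, -⟩ | ⟨-, -, h3⟩
    · rw [Walk.support_cons]
      have h2 := ih (h1 ▸ hxy)
      rw [← h1] at h2
      exact List.mem_cons_of_mem _ h2
    · exact absurd (by rw [h1]; rfl) hx
    · exact absurd (by rw [← h3]) hx

/-- core lower-bound lemma -/
lemma no_proper_path {α : Type*} (hm : 2 ≤ m) (c : Sym2 (VV m) → α) (j j' : Fin 4)
    (hj : j ≠ 0) (hj' : j' ≠ 0) (hjj : j ≠ j')
    (hc : c s(v1 hm, (j, Sum.inl (zz hm))) = c s(v1 hm, (j', Sum.inl (zz hm)))) :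
    ∀ p : (myG hm).Walk (j, Sum.inl (zz hm)) (j', Sum.inl (zz hm)),
      p.IsPath → ¬ IsProperWalk c p := by
  suffices H : ∀ (u v : VV m) (p : (myG hm).Walk u v),
      u = (j, Sum.inl (zz hm)) → v = (j', Sum.inl (zz hm)) →
      p.IsPath → ¬ IsProperWalk c p by
    intro p hp hprop; exact H _ _ p rfl rfl hp hprop
  intro u v p
  cases p with
  | nil =>
    intro hu hv _ _
    rw [hu] at hv
    exact hjj (congrArg Prod.fst hv)
  | @cons _ z _ h q =>
    intro hu hv hp hprop
    subst hu; subst hv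
    rw [Walk.cons_isPath_iff] at hp
    obtain ⟨hq, hAq⟩ := hp
    rcases adj_cases hm h with h1 | ⟨h1, -, -⟩ | ⟨h1, -, -⟩
    · -- z in block j : walk must return to A
      have h2 : (z.1, Sum.inl (zz hm)) ∈ q.support := cut2 hm q (by rw [← h1]; simpa using hjj)
      rw [← h1] at h2
      exact hAq h2
    · exact hj (congrArg Prod.fst h1)
    · -- z = v1
      cases q with
      | nil =>
        exact hj' (congrArg Prod.fst h1)
      | @cons _ z' _ h' q' =>
        rw [Walk.cons_isPath_iff] at hq
        obtain ⟨hq', hvq'⟩ := hq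
        rw [h1] at h' hvq'
        rcases adj_cases hm h' with h2 | ⟨-, h3, h4⟩ | ⟨h2, -, -⟩
        · -- z' in block 0 : must come back through v1
          have hb : (v1 hm).1 ≠ (j' : Fin 4) := by simpa [v1] using hj'.symm
          exact hvq' (cut hm q' (by rw [← h2]; exact hb))
        · -- z' = (k, inl zz), k ≠ 0
          have hz' : z' = (z'.1, Sum.inl (zz hm)) := Prod.ext_iff.mpr ⟨rfl, h4⟩
          by_cases hk : z'.1 = j'
          · -- z' = B: two consecutive edges with equal colors
            have hzB : z' = (j', Sum.inl (zz hm)) := by rw [hz', hk]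
            rw [IsProperWalk, Walk.edges_cons, Walk.edges_cons] at hprop
            have h5 := hprop.rel_head
            rw [h1, hzB, Sym2.eq_swap (a := (j, Sum.inl (zz hm)))] at h5
            exact h5 hc
          · by_cases hkj : z'.1 = j
            · -- z' = A, but A not in support
              apply hAq
              rw [Walk.support_cons]
              apply List.mem_cons_of_mem
              have : z' = (j, Sum.inl (zz hm)) := by rw [hz', hkj]
              rw [← this]
              exact Walk.start_mem_support _
            · exact hvq' (cut hm q' (by show z'.1 ≠ j'; simpa using hk))
        · exact (myG hm).irrefl (h2 ▸ h')


/-! ### the 3-coloring -/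

def ecol (x y : VV m) : Fin 3 :=
  if x.1 = y.1 then
    match x.2, y.2 with
    | Sum.inl a, Sum.inr b => if a = b then 1 else 0
    | Sum.inr b, Sum.inl a => if a = b then 1 else 0
    | _, _ => 0
  else ⟨(x.1.val + y.1.val - 1) % 3, Nat.mod_lt _ (by omega)⟩

lemma ecol_comm (x y : VV m) : ecol x y = ecol y x := by
  obtain ⟨i, s⟩ := x; obtain ⟨j, t⟩ := y
  unfold ecol
  by_cases h : i = j
  · subst h
    rw [if_pos rfl, if_pos rfl]
    rcases s with a | b <;> rcases t with a' | b' <;> simp [eq_comm]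
  · rw [if_neg h, if_neg (Ne.symm h)]
    simp only [Fin.mk.injEq]
    omega

def cc : Sym2 (VV m) → Fin 3 := Sym2.lift ⟨ecol, ecol_comm⟩

@[simp] lemma cc_lr (i : Fin 4) (a b : Fin m) :
    cc s((i, Sum.inl a), (i, Sum.inr b)) = if a = b then 1 else 0 := by
  simp [cc, ecol]

@[simp] lemma cc_rl (i : Fin 4) (a b : Fin m) :
    cc s((i, Sum.inr b), (i, Sum.inl a)) = if a = b then 1 else 0 := by
  simp [cc, ecol]

lemma cc_bridge_val (hm : 2 ≤ m) (j : Fin 4) (hj : j ≠ 0) :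
    (cc s((j, Sum.inl (zz hm)), v1 hm)).val = (j.val - 1) % 3 := by
  have h : (j : Fin 4) ≠ (0 : Fin 4) := hj
  simp [cc, v1, ecol, h]

lemma bridge_ne (hm : 2 ≤ m) (i j : Fin 4) (hi : i ≠ 0) (hj : j ≠ 0) (hij : i ≠ j) :
    cc s((i, Sum.inl (zz hm)), v1 hm) ≠ cc s((j, Sum.inl (zz hm)), v1 hm) := by
  intro h
  have h' := congrArg Fin.val h
  rw [cc_bridge_val hm i hi, cc_bridge_val hm j hj] at h'
  have h1 : i.val < 4 := i.isLt
  have h2 : j.val < 4 := j.isLt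
  have h3 : i.val ≠ 0 := fun h => hi (Fin.ext h)
  have h4 : j.val ≠ 0 := fun h => hj (Fin.ext h)
  have h5 : i.val ≠ j.val := by simpa [Fin.ext_iff] using hij
  omega

/-! ### glue lemmas -/

lemma isPath_append {W : Type*} {G : SimpleGraph W} {u v w : W} {p : G.Walk u v} {q : G.Walk v w}
    (hp : p.IsPath) (hq : q.IsPath) (h : ∀ x, x ∈ p.support → x ∈ q.support → x = v) :
    (p.append q).IsPath := by
  rw [Walk.isPath_def, Walk.support_append]
  refine List.Nodup.append hp.support_nodup (hq.support_nodup.sublist (List.tail_sublist _)) ?_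
  intro x hx hx'
  have hxv : x = v := h x hx (List.mem_of_mem_tail hx')
  subst hxv
  have := hq.support_nodup
  rw [q.support_eq_cons, List.nodup_cons] at this
  exact this.1 hx'

lemma proper_append {W α : Type*} {G : SimpleGraph W} {u v w : W} {p : G.Walk u v} {q : G.Walk v w}
    {c : Sym2 W → α} (hp : IsProperWalk c p) (hq : IsProperWalk c q)
    (h : ∀ e ∈ p.edges.getLast?, ∀ f ∈ q.edges.head?, c e ≠ c f) :
    IsProperWalk c (p.append q) := by
  rw [IsProperWalk, List.Chain', Walk.edges_append, List.isChain_append]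
  exact ⟨hp, hq, h⟩

lemma proper_reverse {W α : Type*} {G : SimpleGraph W} {u v : W} {p : G.Walk u v}
    {c : Sym2 W → α} (hp : IsProperWalk c p) : IsProperWalk c p.reverse := by
  rw [IsProperWalk, List.Chain', Walk.edges_reverse, List.isChain_reverse]
  exact hp.imp fun a b hab => Ne.symm hab


/-! ### half paths : from any vertex of block j (j ≠ 0) to v1, ending with the bridge edge -/

lemma half (hm : 2 ≤ m) (j : Fin 4) (hj : j ≠ 0) (s : Fin m ⊕ Fin m) :
    ∃ p : (myG hm).Walk (j, s) (v1 hm), p.IsPath ∧ IsProperWalk cc p ∧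
      (∀ x ∈ p.support, x = v1 hm ∨ x.1 = j) ∧
      p.edges.getLast? = some s((j, Sum.inl (zz hm)), v1 hm) := by
  have hb : (myG hm).Adj (j, Sum.inl (zz hm)) (v1 hm) := (adj_bridge hm j hj).symm
  have hjv : ∀ t : Fin m ⊕ Fin m, ((j, t) : VV m) ≠ v1 hm := fun t h => hj (congrArg Prod.fst h)
  have h10 : on1 hm ≠ zz hm := by simp [on1, zz, Fin.ext_iff]
  have h01 : zz hm ≠ on1 hm := h10.symm
  rcases s with a | b
  · by_cases ha : a = zz hm
    · subst ha
      refine ⟨Walk.cons hb Walk.nil, ?_, ?_, ?_, rfl⟩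
      · simp [Walk.isPath_def, hjv _]
      · simp [IsProperWalk, List.Chain']
      · intro x hx; simp [Walk.support_cons] at hx
        rcases hx with h | h <;> simp [h]
    · by_cases hβ : cc s((j, Sum.inl (zz hm)), v1 hm) = 1
      · -- path l_a, r_a, l_zz, v1 : colors 1, 0, β=1
        refine ⟨Walk.cons (adj_lr hm j a a)
          (Walk.cons ((adj_lr hm j (zz hm) a).symm) (Walk.cons hb Walk.nil)), ?_, ?_, ?_, rfl⟩
        · simp [Walk.isPath_def, hjv _, Prod.ext_iff, ha, hj, Ne.symm ha]
        · simp [IsProperWalk, List.Chain', ha, hβ, Ne.symm ha]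
        · intro x hx; simp [Walk.support_cons] at hx
          rcases hx with h | h | h | h <;> simp [h]
      · -- path l_a, r_zz, l_zz, v1 : colors 0, 1, β ≠ 1
        refine ⟨Walk.cons (adj_lr hm j a (zz hm))
          (Walk.cons ((adj_lr hm j (zz hm) (zz hm)).symm) (Walk.cons hb Walk.nil)), ?_, ?_, ?_, rfl⟩
        · simp [Walk.isPath_def, hjv _, Prod.ext_iff, ha, hj]
        · simp [IsProperWalk, List.Chain', ha, hβ]
          exact fun h => hβ h.symm
        · intro x hx; simp [Walk.support_cons] at hx
          rcases hx with h | h | h | h <;> simp [h]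
  · by_cases hbz : b = zz hm
    · subst hbz
      by_cases hβ : cc s((j, Sum.inl (zz hm)), v1 hm) = 1
      · -- r_zz, l_1, r_1, l_zz, v1 : colors 0 1 0 1
        refine ⟨Walk.cons ((adj_lr hm j (on1 hm) (zz hm)).symm)
          (Walk.cons (adj_lr hm j (on1 hm) (on1 hm))
          (Walk.cons ((adj_lr hm j (zz hm) (on1 hm)).symm) (Walk.cons hb Walk.nil))), ?_, ?_, ?_, rfl⟩
        · simp [Walk.isPath_def, hjv _, Prod.ext_iff, h10, hj, h01]
        · simp [IsProperWalk, List.Chain', h10, hβ, h01]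
        · intro x hx; simp [Walk.support_cons] at hx
          rcases hx with h | h | h | h | h <;> simp [h]
      · -- r_zz, l_zz, v1 : colors 1, β ≠ 1
        refine ⟨Walk.cons ((adj_lr hm j (zz hm) (zz hm)).symm) (Walk.cons hb Walk.nil),
          ?_, ?_, ?_, rfl⟩
        · simp [Walk.isPath_def, hjv _, Prod.ext_iff, hj]
        · simp [IsProperWalk, List.Chain', hβ]
          exact fun h => hβ h.symm
        · intro x hx; simp [Walk.support_cons] at hx
          rcases hx with h | h | h <;> simp [h]
    · by_cases hβ : cc s((j, Sum.inl (zz hm)), v1 hm) = 0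
      · -- r_b, l_b, r_zz, l_zz, v1 : colors 1 0 1 0
        refine ⟨Walk.cons ((adj_lr hm j b b).symm)
          (Walk.cons (adj_lr hm j b (zz hm))
          (Walk.cons ((adj_lr hm j (zz hm) (zz hm)).symm) (Walk.cons hb Walk.nil))), ?_, ?_, ?_, rfl⟩
        · simp [Walk.isPath_def, hjv _, Prod.ext_iff, hbz, hj]
        · simp [IsProperWalk, List.Chain', hbz, hβ]
        · intro x hx; simp [Walk.support_cons] at hx
          rcases hx with h | h | h | h | h <;> simp [h]
      · -- r_b, l_zz, v1 : colors 0, β ≠ 0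
        refine ⟨Walk.cons ((adj_lr hm j (zz hm) b).symm) (Walk.cons hb Walk.nil),
          ?_, ?_, ?_, rfl⟩
        · simp [Walk.isPath_def, hjv _, Prod.ext_iff, hj]
        · simp [IsProperWalk, List.Chain', hbz, hβ, Ne.symm hbz]
          exact fun h => hβ h.symm
        · intro x hx; simp [Walk.support_cons] at hx
          rcases hx with h | h | h <;> simp [h]


lemma half0 (hm : 2 ≤ m) (s : Fin m ⊕ Fin m) (hs : s ≠ Sum.inl (zz hm)) (t : Fin 3) :
    ∃ p : (myG hm).Walk ((0 : Fin 4), s) (v1 hm), p.IsPath ∧ IsProperWalk cc p ∧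
      (∀ x ∈ p.support, x.1 = 0) ∧ (∀ e ∈ p.edges.getLast?, cc e ≠ t) := by
  have h10 : on1 hm ≠ zz hm := by simp [on1, zz, Fin.ext_iff]
  have h01 : zz hm ≠ on1 hm := h10.symm
  rcases s with a | b
  · have ha : a ≠ zz hm := fun h => hs (by rw [h])
    by_cases ht : t = 1
    · -- l_a, r_a, l_zz : colors 1, 0
      refine ⟨Walk.cons (adj_lr hm 0 a a) (Walk.cons ((adj_lr hm 0 (zz hm) a).symm) Walk.nil),
        ?_, ?_, ?_, ?_⟩
      · simp [Walk.isPath_def, v1, Prod.ext_iff, ha, Ne.symm ha]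
      · dsimp only [v1]; simp [IsProperWalk, List.Chain', Ne.symm ha]
      · intro x hx; simp [Walk.support_cons, v1] at hx
        rcases hx with h | h | h <;> simp [h, v1]
      · intro e he; dsimp only [v1] at he; simp at he; subst he
        simp [Ne.symm ha, ht]
    · -- l_a, r_zz, l_zz : colors 0, 1
      refine ⟨Walk.cons (adj_lr hm 0 a (zz hm)) (Walk.cons ((adj_lr hm 0 (zz hm) (zz hm)).symm) Walk.nil),
        ?_, ?_, ?_, ?_⟩
      · simp [Walk.isPath_def, v1, Prod.ext_iff, ha, Ne.symm ha]
      · dsimp only [v1]; simp [IsProperWalk, List.Chain', ha]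
      · intro x hx; simp [Walk.support_cons, v1] at hx
        rcases hx with h | h | h <;> simp [h, v1]
      · intro e he; dsimp only [v1] at he; simp at he; subst he
        simpa using Ne.symm ht
  · by_cases hbz : b = zz hm
    · subst hbz
      by_cases ht : t = 1
      · -- r_zz, l_1, r_1, l_zz : colors 0, 1, 0
        refine ⟨Walk.cons ((adj_lr hm 0 (on1 hm) (zz hm)).symm)
          (Walk.cons (adj_lr hm 0 (on1 hm) (on1 hm))
          (Walk.cons ((adj_lr hm 0 (zz hm) (on1 hm)).symm) Walk.nil)), ?_, ?_, ?_, ?_⟩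
        · simp [Walk.isPath_def, v1, Prod.ext_iff, h10, h01]
        · dsimp only [v1]; simp [IsProperWalk, List.Chain', h10, h01]
        · intro x hx; simp [Walk.support_cons, v1] at hx
          rcases hx with h | h | h | h <;> simp [h, v1]
        · intro e he; dsimp only [v1] at he; simp at he; subst he
          simp [h01, ht]
      · -- r_zz, l_zz : color 1
        refine ⟨Walk.cons ((adj_lr hm 0 (zz hm) (zz hm)).symm) Walk.nil, ?_, ?_, ?_, ?_⟩
        · simp [Walk.isPath_def, v1, Prod.ext_iff]
        · dsimp only [v1]; simp [IsProperWalk, List.Chain']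
        · intro x hx; simp [Walk.support_cons, v1] at hx
          rcases hx with h | h <;> simp [h, v1]
        · intro e he; dsimp only [v1] at he; simp at he; subst he
          simpa using Ne.symm ht
    · by_cases ht : t = 0
      · -- r_b, l_b, r_zz, l_zz : colors 1, 0, 1
        refine ⟨Walk.cons ((adj_lr hm 0 b b).symm)
          (Walk.cons (adj_lr hm 0 b (zz hm))
          (Walk.cons ((adj_lr hm 0 (zz hm) (zz hm)).symm) Walk.nil)), ?_, ?_, ?_, ?_⟩
        · simp [Walk.isPath_def, v1, Prod.ext_iff, hbz, Ne.symm hbz]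
        · dsimp only [v1]; simp [IsProperWalk, List.Chain', hbz, Ne.symm hbz]
        · intro x hx; simp [Walk.support_cons, v1] at hx
          rcases hx with h | h | h | h <;> simp [h, v1]
        · intro e he; dsimp only [v1] at he; simp at he; subst he
          simp [ht]
      · -- r_b, l_zz : color 0
        refine ⟨Walk.cons ((adj_lr hm 0 (zz hm) b).symm) Walk.nil, ?_, ?_, ?_, ?_⟩
        · simp [Walk.isPath_def, v1, Prod.ext_iff]
        · dsimp only [v1]; simp [IsProperWalk, List.Chain']
        · intro x hx; simp [Walk.support_cons, v1] at hx
          rcases hx with h | h <;> simp [h, v1]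
        · intro e he; dsimp only [v1] at he; simp at he; subst he
          simpa [Ne.symm hbz] using Ne.symm ht

lemma within (hm : 2 ≤ m) (i : Fin 4) (s t : Fin m ⊕ Fin m) :
    ∃ p : (myG hm).Walk ((i, s)) ((i, t)), p.IsPath ∧ IsProperWalk cc p := by
  rcases s with a | b <;> rcases t with a' | b'
  · by_cases h : a = a'
    · subst h; exact ⟨Walk.nil, by simp, by simp [IsProperWalk, List.Chain']⟩
    · refine ⟨Walk.cons (adj_lr hm i a a) (Walk.cons ((adj_lr hm i a' a).symm) Walk.nil),
        ?_, ?_⟩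
      · simp [Walk.isPath_def, Prod.ext_iff, h, Ne.symm h]
      · simp [IsProperWalk, List.Chain', Ne.symm h]
  · exact ⟨Walk.cons (adj_lr hm i a b') Walk.nil, by simp [Walk.isPath_def], by simp [IsProperWalk, List.Chain']⟩
  · exact ⟨Walk.cons ((adj_lr hm i a' b).symm) Walk.nil, by simp [Walk.isPath_def], by simp [IsProperWalk, List.Chain']⟩
  · by_cases h : b = b'
    · subst h; exact ⟨Walk.nil, by simp, by simp [IsProperWalk, List.Chain']⟩
    · refine ⟨Walk.cons ((adj_lr hm i b b).symm) (Walk.cons (adj_lr hm i b b') Walk.nil),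
        ?_, ?_⟩
      · simp [Walk.isPath_def, Prod.ext_iff, h, Ne.symm h]
      · simp [IsProperWalk, List.Chain', h]

lemma crossnn (hm : 2 ≤ m) (i j : Fin 4) (hi : i ≠ 0) (hj : j ≠ 0) (hij : i ≠ j)
    (s t : Fin m ⊕ Fin m) :
    ∃ p : (myG hm).Walk ((i, s)) ((j, t)), p.IsPath ∧ IsProperWalk cc p := by
  obtain ⟨p₁, hp₁, hc₁, hs₁, hl₁⟩ := half hm i hi s
  obtain ⟨p₂, hp₂, hc₂, hs₂, hl₂⟩ := half hm j hj t
  refine ⟨p₁.append p₂.reverse, isPath_append hp₁ hp₂.reverse ?_,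
    proper_append hc₁ (proper_reverse hc₂) ?_⟩
  · intro x hx hx'
    rw [Walk.support_reverse, List.mem_reverse] at hx'
    rcases hs₁ x hx with h | h
    · exact h
    · rcases hs₂ x hx' with h' | h'
      · exact h'
      · exact absurd (h.symm.trans h') hij
  · intro e he f hf
    rw [Walk.edges_reverse, List.head?_reverse, hl₂] at hf
    rw [hl₁] at he
    simp only [Option.mem_def, Option.some.injEq] at he hf
    subst he; subst hf
    exact bridge_ne hm i j hi hj hij

lemma cross0 (hm : 2 ≤ m) (j : Fin 4) (hj : j ≠ 0) (s t : Fin m ⊕ Fin m) :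
    ∃ p : (myG hm).Walk (((0 : Fin 4), s)) ((j, t)), p.IsPath ∧ IsProperWalk cc p := by
  obtain ⟨p₂, hp₂, hc₂, hs₂, hl₂⟩ := half hm j hj t
  by_cases hs : s = Sum.inl (zz hm)
  · subst hs
    exact ⟨p₂.reverse, hp₂.reverse, proper_reverse hc₂⟩
  · obtain ⟨p₁, hp₁, hc₁, hs₁, hl₁⟩ := half0 hm s hs (cc s((j, Sum.inl (zz hm)), v1 hm))
    refine ⟨p₁.append p₂.reverse, isPath_append hp₁ hp₂.reverse ?_,
      proper_append hc₁ (proper_reverse hc₂) ?_⟩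
    · intro x hx hx'
      rw [Walk.support_reverse, List.mem_reverse] at hx'
      rcases hs₂ x hx' with h' | h'
      · exact h'
      · exact absurd ((hs₁ x hx) ▸ h') (Ne.symm hj)
    · intro e he f hf
      rw [Walk.edges_reverse, List.head?_reverse, hl₂] at hf
      simp only [Option.mem_def, Option.some.injEq] at hf
      subst hf
      exact hl₁ e he

lemma conn_col (hm : 2 ≤ m) : ∀ u v : VV m,
    ∃ p : (myG hm).Walk u v, p.IsPath ∧ IsProperWalk cc p := by
  intro u v
  obtain ⟨i, s⟩ := u; obtain ⟨j, t⟩ := v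
  by_cases hij : i = j
  · subst hij; exact within hm i s t
  · by_cases hi : i = 0
    · subst hi; exact cross0 hm j (Ne.symm hij) s t
    · by_cases hj : j = 0
      · subst hj
        obtain ⟨p, h1, h2⟩ := cross0 hm i hi t s
        exact ⟨p.reverse, h1.reverse, proper_reverse h2⟩
      · exact crossnn hm i j hi hj hij s t


/-! ### easy parts -/

lemma connected (hm : 2 ≤ m) : (myG hm).Connected := by
  rw [connected_iff]
  refine ⟨fun u v => ?_, ⟨v1 hm⟩⟩
  obtain ⟨p, -, -⟩ := conn_col hm u v
  exact ⟨p⟩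

lemma colorable (hm : 2 ≤ m) : (myG hm).Colorable 2 := by
  refine ⟨Coloring.mk (fun x => if decide (x.1 = 0) = x.2.isLeft then (0 : Fin 2) else 1) ?_⟩
  intro x y h
  rw [adj_iff] at h
  obtain ⟨-, h⟩ := h
  rcases h with (⟨h1, h2, h3⟩ | ⟨h1, h2, h3, h4⟩) | (⟨h1, h2, h3⟩ | ⟨h1, h2, h3, h4⟩)
  · rw [Sum.isLeft_iff] at h2; rw [Sum.isRight_iff] at h3
    obtain ⟨a, ha⟩ := h2; obtain ⟨b, hb⟩ := h3
    by_cases h0 : y.1 = 0 <;> simp [h1, h0, ha, hb]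
  · have : x.1 ≠ y.1 := h3
    simp [h1, h2, h4, Ne.symm (h1 ▸ this)]
  · rw [Sum.isLeft_iff] at h2; rw [Sum.isRight_iff] at h3
    obtain ⟨a, ha⟩ := h2; obtain ⟨b, hb⟩ := h3
    by_cases h0 : x.1 = 0 <;> simp [h1, h0, ha, hb]
  · have : y.1 ≠ x.1 := h3
    simp [h1, h2, h4, Ne.symm (h1 ▸ this)]

lemma degree_ge (hm : 2 ≤ m) (x : VV m) : m ≤ ((myG hm).neighborSet x).ncard := by
  obtain ⟨i, s⟩ := x
  have key : ∀ (f : Fin m → ((myG hm).neighborSet (i, s) : Set (VV m))),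
      Function.Injective f → m ≤ ((myG hm).neighborSet (i, s)).ncard := by
    intro f hf
    calc m = Nat.card (Fin m) := by simp
      _ ≤ Nat.card ((myG hm).neighborSet (i, s) : Set (VV m)) :=
          Nat.card_le_card_of_injective f hf
      _ = ((myG hm).neighborSet (i, s)).ncard := Nat.card_coe_set_eq _
  rcases s with a | b
  · exact key (fun b => ⟨(i, Sum.inr b), adj_lr hm i a b⟩)
      (fun b b' h => by simpa [Prod.ext_iff, Subtype.ext_iff] using h)
  · exact key (fun a => ⟨(i, Sum.inl a), (adj_lr hm i a b).symm⟩)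
      (fun a a' h => by simpa [Prod.ext_iff, Subtype.ext_iff] using h)

lemma degree_eq (hm : 2 ≤ m) :
    ((myG hm).neighborSet ((0 : Fin 4), Sum.inr (zz hm))).ncard = m := by
  have hset : (myG hm).neighborSet ((0 : Fin 4), Sum.inr (zz hm)) =
      Set.range (fun a : Fin m => ((0 : Fin 4), Sum.inl a)) := by
    ext y
    simp only [mem_neighborSet, Set.mem_range]
    constructor
    · intro h
      rw [adj_iff] at h
      obtain ⟨hne, h⟩ := h
      simp only at h
      rcases h with (⟨-, h2, -⟩ | ⟨-, h2, -⟩) | (⟨h1, h2, -⟩ | ⟨h1, -, h3, -⟩)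
      · simp at h2
      · simp at h2
      · rw [Sum.isLeft_iff] at h2
        obtain ⟨a, ha⟩ := h2
        exact ⟨a, (Prod.ext_iff.mpr ⟨h1, ha⟩).symm⟩
      · exact absurd h1 h3
    · rintro ⟨a, rfl⟩
      exact (adj_lr hm 0 a (zz hm)).symm
  rw [hset, ← Nat.card_coe_set_eq,
    Nat.card_range_of_injective (f := fun a : Fin m => ((0 : Fin 4), Sum.inl a))
      (fun a a' h => by simpa [Prod.ext_iff] using h)]
  simp

/-! ### pc = 3 -/

lemma no2 (hm : 2 ≤ m) (c : Sym2 (VV m) → Fin 2) : ¬ IsProperConnColoring (myG hm) c := by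
  intro hc
  have key : ∀ j j' : Fin 4, j ≠ 0 → j' ≠ 0 → j ≠ j' →
      c s(v1 hm, (j, Sum.inl (zz hm))) = c s(v1 hm, (j', Sum.inl (zz hm))) → False := by
    intro j j' hj hj' hjj heq
    obtain ⟨p, hp, hw⟩ := hc (j, Sum.inl (zz hm)) (j', Sum.inl (zz hm))
    exact no_proper_path hm c j j' hj hj' hjj heq p hp hw
  have h3 : ∀ a b d : Fin 2, a = b ∨ a = d ∨ b = d := by decide
  rcases h3 (c s(v1 hm, ((1 : Fin 4), Sum.inl (zz hm))))
    (c s(v1 hm, ((2 : Fin 4), Sum.inl (zz hm))))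
    (c s(v1 hm, ((3 : Fin 4), Sum.inl (zz hm)))) with h | h | h
  · exact key 1 2 (by decide) (by decide) (by decide) h
  · exact key 1 3 (by decide) (by decide) (by decide) h
  · exact key 2 3 (by decide) (by decide) (by decide) h

lemma notmem (hm : 2 ≤ m) (k : ℕ) (hk : k < 3) :
    k ∉ {k | ∃ c : Sym2 (VV m) → Fin k, IsProperConnColoring (myG hm) c} := by
  rintro ⟨c, hc⟩
  apply no2 hm (fun e => Fin.castLE (by omega : k ≤ 2) (c e))
  intro u v
  obtain ⟨p, hp, hw⟩ := hc u v
  exact ⟨p, hp, hw.imp fun a b hab heq => hab (Fin.castLE_injective _ heq)⟩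

lemma pc3 (hm : 2 ≤ m) : pc (myG hm) = 3 := by
  have h3 : 3 ∈ {k | ∃ c : Sym2 (VV m) → Fin k, IsProperConnColoring (myG hm) c} :=
    ⟨cc, conn_col hm⟩
  refine le_antisymm (Nat.sInf_le h3) ?_
  by_contra h
  push_neg at h
  exact notmem hm _ h (Nat.sInf_mem ⟨3, h3⟩)

lemma card_eq (hm : 2 ≤ m) : Fintype.card (VV m) = 8 * m := by
  simp [Fintype.card_prod, Fintype.card_sum, Fintype.card_fin]
  omega


end PC19

theorem stmt_19 (m : ℕ) (hm : 2 ≤ m) :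
    ∀ G : SimpleGraph (Fin 4 × (Fin m ⊕ Fin m)),
      G = SimpleGraph.fromRel (fun x y =>
        (x.1 = y.1 ∧ x.2.isLeft ∧ y.2.isRight) ∨
        (x.1 = 0 ∧ x.2 = Sum.inl (⟨0, by omega⟩ : Fin m) ∧ x.1 ≠ y.1 ∧
          y.2 = Sum.inl (⟨0, by omega⟩ : Fin m))) →
      Fintype.card (Fin 4 × (Fin m ⊕ Fin m)) = 8 * m ∧
      G.Connected ∧ G.Colorable 2 ∧
      (∀ x, m ≤ (G.neighborSet x).ncard) ∧
      (∃ x, (G.neighborSet x).ncard = m) ∧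
      pc G = 3 := by
  intro G hG
  have hG' : G = PC19.myG hm := hG
  subst hG'
  exact ⟨PC19.card_eq hm, PC19.connected hm, PC19.colorable hm,
    PC19.degree_ge hm, ⟨_, PC19.degree_eq hm⟩, PC19.pc3 hm⟩
end
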